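/- Let p ≥ 5 be a prime and let k_1, ..., k_t be finite fields of characteristic p. If G is a subgroup of SL_2(k_1) × ... × SL_2(k_t) whose image under the natural quotient map to PSL_2(k_1) × ... × PSL_2(k_t) is the whole group, then G = SL_2(k_1) × ... × SL_2(k_t). -/

import Mathlib

open Matrix
open scoped commutatorElement
variable {k : Type} [Field k]

def myU (b : k) : SpecialLinearGroup (Fin 2) k := ⟨!![1, b; 0, 1], by simp [Matrix.det_fin_two_of]⟩
def myL (c : k) : SpecialLinearGroup (Fin 2) k := ⟨!![1, 0; c, 1], by simp [Matrix.det_fin_two_of]⟩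
def myD (u : k) (hu : u ≠ 0) : SpecialLinearGroup (Fin 2) k :=
  ⟨!![u, 0; 0, u⁻¹], by simp [Matrix.det_fin_two_of, mul_inv_cancel₀ hu]⟩

lemma comm_eq {H : Type*} [Group H] (a b x : H) (h : a * b = x * (b * a)) : ⁅a, b⁆ = x := by
  rw [commutatorElement_def, h]; group

lemma comm_D_U (u : k) (hu : u ≠ 0) (b : k) : ⁅myD u hu, myU b⁆ = myU ((u ^ 2 - 1) * b) := by
  apply comm_eq
  ext i j
  fin_cases i <;> fin_cases j <;> simp only [Matrix.SpecialLinearGroup.coe_mul] <;>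
    simp [myU, myD, Matrix.SpecialLinearGroup.coe_mul, Matrix.mul_fin_two] <;> field_simp <;> ring

lemma comm_D_L (u : k) (hu : u ≠ 0) (c : k) : ⁅myD u hu, myL c⁆ = myL ((u⁻¹ ^ 2 - 1) * c) := by
  apply comm_eq
  ext i j
  fin_cases i <;> fin_cases j <;> simp only [Matrix.SpecialLinearGroup.coe_mul] <;>
    simp [myL, myD, Matrix.SpecialLinearGroup.coe_mul, Matrix.mul_fin_two] <;> field_simp <;> ring

lemma det_rel (M : SpecialLinearGroup (Fin 2) k) :
    M.1 0 0 * M.1 1 1 - M.1 0 1 * M.1 1 0 = 1 := by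
  have := M.2
  rwa [Matrix.det_fin_two] at this

lemma decompA (M : SpecialLinearGroup (Fin 2) k) (hc : M.1 1 0 ≠ 0) :
    M = myU ((M.1 0 0 - 1) / M.1 1 0) * myL (M.1 1 0) * myU ((M.1 1 1 - 1) / M.1 1 0) := by
  have hdet := det_rel M
  ext i j
  fin_cases i <;> fin_cases j <;> simp only [Matrix.SpecialLinearGroup.coe_mul] <;>
    simp [myU, myL, Matrix.SpecialLinearGroup.coe_mul, Matrix.mul_fin_two] <;>
    field_simp <;> grind

lemma myL_zero : myL (0 : k) = 1 := by
  ext i j; fin_cases i <;> fin_cases j <;> simp [myL]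

lemma myL_mul (a b : k) : myL a * myL b = myL (a + b) := by
  ext i j
  fin_cases i <;> fin_cases j <;> simp only [Matrix.SpecialLinearGroup.coe_mul] <;>
    simp [myL, Matrix.SpecialLinearGroup.coe_mul, Matrix.mul_fin_two]

lemma decompFull (M : SpecialLinearGroup (Fin 2) k) :
    ∃ x c y z : k, M = myU x * myL c * myU y * myL z := by
  by_cases hc : M.1 1 0 ≠ 0
  · refine ⟨(M.1 0 0 - 1) / M.1 1 0, M.1 1 0, (M.1 1 1 - 1) / M.1 1 0, 0, ?_⟩
    rw [myL_zero, mul_one]; exact decompA M hc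
  · push_neg at hc
    have hd : (M * myL 1).1 1 0 ≠ 0 := by
      have hdet := det_rel M
      have : (M * myL 1).1 1 0 = M.1 1 1 := by
        simp only [Matrix.SpecialLinearGroup.coe_mul]
        simp [myL, Matrix.SpecialLinearGroup.coe_mul, Matrix.mul_apply, Fin.sum_univ_two, hc]
      rw [this]
      intro h; rw [hc, h] at hdet; simp at hdet
    have key := decompA (M * myL 1) hd
    refine ⟨((M * myL 1).1 0 0 - 1) / (M * myL 1).1 1 0, (M * myL 1).1 1 0,
      ((M * myL 1).1 1 1 - 1) / (M * myL 1).1 1 0, -1, ?_⟩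
    have hM : M = (M * myL 1) * myL (-1) := by
      rw [mul_assoc, myL_mul]
      norm_num [myL_zero]
    conv_lhs => rw [hM, key]

lemma conj_central {H : Type*} [Group H] {z : H} (hz : z ∈ Subgroup.center H) (y : H) :
    z * y * z⁻¹ = y := by
  rw [show z * y = y * z from (Subgroup.mem_center_iff.mp hz y).symm, mul_inv_cancel_right]

lemma comm_shift_left {H : Type*} [Group H] {z : H} (hz : z ∈ Subgroup.center H) (g b : H) :
    ⁅g * z, b⁆ = ⁅g, b⁆ := by
  have hz' : g * z = z * g := Subgroup.mem_center_iff.mp hz g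
  rw [commutatorElement_def, commutatorElement_def, hz']
  have h1 : z * g * b * (z * g)⁻¹ = g * b * g⁻¹ := by
    rw [_root_.mul_inv_rev, show z * g * b * (g⁻¹ * z⁻¹) = z * (g * b * g⁻¹) * z⁻¹ by group,
      conj_central hz]
  rw [h1]

lemma comm_shift {H : Type*} [Group H] {z w : H} (hz : z ∈ Subgroup.center H)
    (hw : w ∈ Subgroup.center H) (g b : H) : ⁅g * z, b * w⁆ = ⁅g, b⁆ := by
  rw [comm_shift_left hz]
  have : ⁅b * w, g⁆ = ⁅b, g⁆ := comm_shift_left hw b g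
  rw [← commutatorElement_inv, this, commutatorElement_inv]

lemma exists_good_unit (p : ℕ) (hp : p.Prime) (hp5 : 5 ≤ p) [Fintype k] [CharP k p] :
    ∃ u : k, u ≠ 0 ∧ u ^ 2 ≠ 1 := by
  classical
  haveI : NeZero p := ⟨hp.ne_zero⟩
  haveI : Fact p.Prime := ⟨hp⟩
  have hcard : p ≤ Fintype.card k := by
    have hinj : Function.Injective (ZMod.castHom (dvd_refl p) k) :=
      (ZMod.castHom (dvd_refl p) k).injective
    simpa using Fintype.card_le_of_injective _ hinj
  have h3 : ({(0 : k), 1, -1} : Finset k).card ≤ 3 := by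
    apply (Finset.card_insert_le _ _).trans
    apply Nat.succ_le_succ
    apply (Finset.card_insert_le _ _).trans
    simp
  have : ∃ u : k, u ∉ ({(0 : k), 1, -1} : Finset k) := by
    by_contra h
    push_neg at h
    have : Fintype.card k ≤ 3 :=
      le_trans (Finset.card_le_card (fun x _ => h x)) h3
    omega
  obtain ⟨u, hu⟩ := this
  simp only [Finset.mem_insert, Finset.mem_singleton, not_or] at hu
  refine ⟨u, hu.1, fun h => ?_⟩
  have : (u - 1) * (u + 1) = 0 := by linear_combination h
  rcases mul_eq_zero.mp this with h' | h'
  · exact hu.2.1 (sub_eq_zero.mp h')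
  · exact hu.2.2 (by linear_combination h')




/-- Let `p ≥ 5` be a prime and `k_1, ..., k_t` finite fields of
characteristic `p`. If `G` is a subgroup of `SL₂(k₁) × ... × SL₂(k_t)` whose image under the
natural quotient map to `PSL₂(k₁) × ... × PSL₂(k_t)` (quotient by the centers) is everything,
then `G` is the whole group. -/
theorem stmt9 (p : ℕ) (hp : p.Prime) (hp5 : 5 ≤ p) (t : ℕ)
    (k : Fin t → Type) [∀ i, Field (k i)] [∀ i, Fintype (k i)]
    (hchar : ∀ i, CharP (k i) p)
    (G : Subgroup (∀ i, Matrix.SpecialLinearGroup (Fin 2) (k i)))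
    (hsurj : Subgroup.map
      (Pi.monoidHom fun i =>
        (QuotientGroup.mk' (Subgroup.center (Matrix.SpecialLinearGroup (Fin 2) (k i)))).comp
          (Pi.evalMonoidHom (fun i => Matrix.SpecialLinearGroup (Fin 2) (k i)) i)) G = ⊤) :
    G = ⊤ := by
  classical
  have hmem : ∀ a : (∀ i, Matrix.SpecialLinearGroup (Fin 2) (k i)), ∃ g ∈ G,
      ∀ i, ∃ z ∈ Subgroup.center (Matrix.SpecialLinearGroup (Fin 2) (k i)), g i * z = a i := by
    intro a
    have hmap : (Pi.monoidHom fun i =>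
        (QuotientGroup.mk' (Subgroup.center (Matrix.SpecialLinearGroup (Fin 2) (k i)))).comp
          (Pi.evalMonoidHom (fun i => Matrix.SpecialLinearGroup (Fin 2) (k i)) i)) a ∈
        Subgroup.map (Pi.monoidHom fun i =>
        (QuotientGroup.mk' (Subgroup.center (Matrix.SpecialLinearGroup (Fin 2) (k i)))).comp
          (Pi.evalMonoidHom (fun i => Matrix.SpecialLinearGroup (Fin 2) (k i)) i)) G := by
      rw [hsurj]; trivial
    obtain ⟨g, hgG, hg⟩ := hmap
    refine ⟨g, hgG, fun i => ?_⟩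
    have h2 : QuotientGroup.mk' (Subgroup.center (Matrix.SpecialLinearGroup (Fin 2) (k i)))
        (g i) = QuotientGroup.mk' _ (a i) := congrFun hg i
    exact (QuotientGroup.mk'_eq_mk' _).mp h2
  have hGcomm : ∀ a b : (∀ i, Matrix.SpecialLinearGroup (Fin 2) (k i)), ⁅a, b⁆ ∈ G := by
    intro a b
    obtain ⟨g, hgG, hga⟩ := hmem a
    obtain ⟨h, hhG, hhb⟩ := hmem b
    choose z hz hz2 using hga
    choose w hw hw2 using hhb
    have key : ⁅a, b⁆ = ⁅g, h⁆ := by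
      funext i
      show ⁅a i, b i⁆ = ⁅g i, h i⁆
      rw [← hz2 i, ← hw2 i, comm_shift (hz i) (hw i)]
    rw [key, commutatorElement_def]
    exact mul_mem (mul_mem (mul_mem hgG hhG) (inv_mem hgG)) (inv_mem hhG)
  have hu : ∀ i, ∃ u : k i, u ≠ 0 ∧ u ^ 2 ≠ 1 := by
    intro i
    haveI := hchar i
    exact exists_good_unit p hp hp5
  choose u hu0 hu1 using hu
  have hPU : ∀ x : (∀ i, k i), (fun i => myU (x i)) ∈ G := by
    intro x
    have key : (fun i => myU (x i)) =
        ⁅(fun i => myD (u i) (hu0 i)), (fun i => myU (x i / ((u i) ^ 2 - 1)))⁆ := by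
      funext i
      show myU (x i) = ⁅myD (u i) (hu0 i), myU (x i / ((u i) ^ 2 - 1))⁆
      rw [comm_D_U]
      congr 1
      field_simp [sub_ne_zero.mpr (hu1 i)]
    rw [key]; exact hGcomm _ _
  have hPL : ∀ c : (∀ i, k i), (fun i => myL (c i)) ∈ G := by
    intro c
    have hne : ∀ i, (u i)⁻¹ ^ 2 - 1 ≠ 0 := by
      intro i
      rw [sub_ne_zero, inv_pow]
      intro h
      exact hu1 i (by rw [← inv_inv ((u i) ^ 2), h, inv_one])
    have key : (fun i => myL (c i)) =
        ⁅(fun i => myD (u i) (hu0 i)), (fun i => myL (c i / ((u i)⁻¹ ^ 2 - 1)))⁆ := by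
      funext i
      show myL (c i) = ⁅myD (u i) (hu0 i), myL (c i / ((u i)⁻¹ ^ 2 - 1))⁆
      rw [comm_D_L]
      congr 1
      rw [mul_comm, div_mul_cancel₀ _ (hne i)]
    rw [key]; exact hGcomm _ _
  rw [eq_top_iff]
  intro M _
  choose x c y zz hxyz using fun i => decompFull (M i)
  have : M = (fun i => myU (x i)) * (fun i => myL (c i)) * (fun i => myU (y i)) *
      (fun i => myL (zz i)) := funext fun i => hxyz i
  rw [this]
  exact mul_mem (mul_mem (mul_mem (hPU x) (hPL c)) (hPU y)) (hPL zz)
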